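/- Let n ≥ 2. For the diagonal generalized Gell-Mann matrices Λ^{(d)} = √(2/(d(d+1))) (Σ_{p=1}^{d} E_{pp} − d E_{d+1,d+1}), 1 ≤ d ≤ n−1, one has Σ_{d=1}^{n−1} Λ^{(d)} ⊗ Λ^{(d)} = −(2/n) I_n ⊗ I_n + 2 Σ_{i=1}^{n} E_{ii} ⊗ E_{ii}; equivalently, its ((l₁,l₂),(k₁,k₂)) entry equals −(2/n) δ^{l₁}_{k₁} δ^{l₂}_{k₂} + 2 Σ_{i=1}^{n} δ^{i l₁} δ^{i}_{k₁} δ^{i l₂} δ^{i}_{k₂}. -/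

import Mathlib

open Matrix Kronecker

noncomputable def gG (a d : ℕ) : ℂ :=
  (if a < d then 1 else 0) - (if a = d then (d : ℂ) else 0)

lemma key (a b n : ℕ) :
    ∑ d ∈ Finset.range n, (2 / ((d : ℂ) * ((d : ℂ) + 1))) * gG a d * gG b d
      = if a < n ∧ b < n then ((if a = b then 2 else 0) - 2 / (n : ℂ)) else 0 := by
  induction n with
  | zero => simp
  | succ n ih =>
    rw [Finset.sum_range_succ, ih]
    have hc : ((n : ℂ) + 1) ≠ 0 := by
      have h := Nat.cast_ne_zero (R := ℂ) |>.mpr (Nat.succ_ne_zero n)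
      push_cast at h; exact h
    push_cast
    rcases Nat.lt_trichotomy a n with ha | ha | ha
    · have hn' : n ≠ 0 := by omega
      have hn0 : (n : ℂ) ≠ 0 := Nat.cast_ne_zero.mpr hn'
      rcases Nat.lt_trichotomy b n with hb | hb | hb
      · rw [if_pos (show a < n ∧ b < n from ⟨ha, hb⟩),
          if_pos (show a < n + 1 ∧ b < n + 1 by omega)]
        simp only [gG, if_pos ha, if_pos hb, if_neg (show ¬ a = n by omega),
          if_neg (show ¬ b = n by omega)]
        have h : (2 : ℂ) / ((n : ℂ) * ((n : ℂ) + 1)) = 2 / n - 2 / ((n : ℂ) + 1) := by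
          field_simp; ring
        linear_combination h
      · rw [if_neg (by omega), if_pos (show a < n + 1 ∧ b < n + 1 by omega),
          if_neg (show ¬ a = b by omega)]
        simp only [gG, if_pos ha, if_neg (show ¬ a = n by omega),
          if_neg (lt_irrefl n), if_neg (show ¬ b < n by omega), if_pos hb]
        field_simp
        ring
      · rw [if_neg (by omega), if_neg (by omega)]
        simp only [gG, if_neg (show ¬ b < n by omega), if_neg (show ¬ b = n by omega)]
        ring
    · rcases Nat.lt_trichotomy b n with hb | hb | hb
      · have hn' : n ≠ 0 := by omega
        have hn0 : (n : ℂ) ≠ 0 := Nat.cast_ne_zero.mpr hn'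
        rw [if_neg (by omega), if_pos (show a < n + 1 ∧ b < n + 1 by omega),
          if_neg (show ¬ a = b by omega)]
        simp only [gG, if_pos hb, if_neg (show ¬ b = n by omega),
          if_neg (lt_irrefl n), if_neg (show ¬ a < n by omega), if_pos ha]
        field_simp
        ring
      · rw [if_neg (by omega), if_pos (show a < n + 1 ∧ b < n + 1 by omega),
          if_pos (ha.trans hb.symm)]
        simp only [gG, if_neg (show ¬ a < n by omega), if_pos ha,
          if_neg (show ¬ b < n by omega), if_pos hb]
        rcases Nat.eq_zero_or_pos n with h0 | h0
        · subst h0; norm_num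
        · have hn0 : (n : ℂ) ≠ 0 := Nat.cast_ne_zero.mpr (by omega)
          field_simp
          ring
      · rw [if_neg (by omega), if_neg (by omega)]
        simp only [gG, if_neg (show ¬ b < n by omega), if_neg (show ¬ b = n by omega)]
        ring
    · rw [if_neg (by omega), if_neg (by omega)]
      simp only [gG, if_neg (show ¬ a < n by omega), if_neg (show ¬ a = n by omega)]
      ring

/-- The diagonal generalized Gell-Mann matrix
`Λ^{(d)} = √(2/(d(d+1))) (Σ_{p=1}^{d} E_{pp} - d E_{d+1,d+1})`, for `1 ≤ d ≤ n-1`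
(zero-based indices: the paper's `E_{pp}`, `1 ≤ p ≤ d`, are the
`stdBasisMatrix p p 1` with `p < d`, and the paper's `E_{d+1,d+1}` is
`stdBasisMatrix d d 1`). -/
noncomputable def lamD (n : ℕ) (d : Fin n) : Matrix (Fin n) (Fin n) ℂ :=
  ((Real.sqrt (2 / (((d : ℕ) : ℝ) * (((d : ℕ) : ℝ) + 1))) : ℝ) : ℂ) •
    ((∑ p : Fin n, if p < d then single p p (1 : ℂ) else 0)
      - (((d : ℕ) : ℂ)) • single d d 1)


lemma lamD_apply (n : ℕ) (d i j : Fin n) :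
    lamD n d i j = if i = j then
      ((Real.sqrt (2 / (((d : ℕ) : ℝ) * (((d : ℕ) : ℝ) + 1))) : ℝ) : ℂ) * gG (i : ℕ) (d : ℕ)
    else 0 := by
  simp only [lamD, gG, Matrix.smul_apply, Matrix.sub_apply, Matrix.sum_apply,
    smul_eq_mul, single, Matrix.of_apply,
    apply_ite (fun M : Matrix (Fin n) (Fin n) ℂ => M i j), Matrix.zero_apply]
  rw [Finset.sum_eq_single i (by intro c _ hc; split_ifs with h1 h2 <;> simp_all)
    (by simp)]
  by_cases hij : i = j
  · subst hij
    simp only [if_pos rfl, and_self, Fin.lt_def, mul_ite, mul_one, mul_zero]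
    have h : (if d = i then ((d:ℕ):ℂ) else 0) = if (i:ℕ) = (d:ℕ) then ((d:ℕ):ℂ) else 0 :=
      if_congr (by rw [Fin.ext_iff, eq_comm]) rfl rfl
    rw [h]
    simp
  · simp only [if_neg hij, if_neg (fun h : d = i ∧ d = j => hij (h.1.symm.trans h.2)),
      mul_zero, sub_zero]
    split_ifs <;> simp_all

/-- `Σ_{d=1}^{n-1} Λ^{(d)} ⊗ Λ^{(d)}
  = -(2/n) Iₙ ⊗ Iₙ + 2 Σ_{i=1}^{n} E_{ii} ⊗ E_{ii}`. -/
theorem stmt5 (n : ℕ) (hn : 2 ≤ n) :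
    (∑ d : Fin n, if (d : ℕ) ≠ 0 then lamD n d ⊗ₖ lamD n d else 0)
      = (-(2 / (n : ℂ))) • ((1 : Matrix (Fin n) (Fin n) ℂ) ⊗ₖ (1 : Matrix (Fin n) (Fin n) ℂ))
        + (2 : ℂ) • ∑ i : Fin n, single i i (1 : ℂ) ⊗ₖ single i i (1 : ℂ) := by
  have h1 : ∀ d : Fin n, (if (d : ℕ) ≠ 0 then lamD n d ⊗ₖ lamD n d else 0)
      = lamD n d ⊗ₖ lamD n d := by
    intro d
    split_ifs with h
    · rfl
    · push_neg at h
      have hz : lamD n d = 0 := by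
        simp [lamD, h]
      simp [hz]
  rw [Finset.sum_congr rfl (fun d _ => h1 d)]
  ext ⟨l1, l2⟩ ⟨k1, k2⟩
  simp only [Matrix.sum_apply, Matrix.add_apply, Matrix.smul_apply, Matrix.kroneckerMap_apply,
    smul_eq_mul, lamD_apply]
  by_cases hk1 : l1 = k1
  · by_cases hk2 : l2 = k2
    · subst hk1; subst hk2
      simp only [if_pos rfl, Matrix.one_apply_eq, single, Matrix.of_apply, and_self, eq_self_iff_true, if_true]
      have hsq : ∀ d : Fin n,
          (((Real.sqrt (2 / (((d : ℕ) : ℝ) * (((d : ℕ) : ℝ) + 1))) : ℝ) : ℂ) * gG (l1 : ℕ) d)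
            * (((Real.sqrt (2 / (((d : ℕ) : ℝ) * (((d : ℕ) : ℝ) + 1))) : ℝ) : ℂ) * gG (l2 : ℕ) d)
          = (2 / (((d : ℕ) : ℂ) * (((d : ℕ) : ℂ) + 1))) * gG (l1 : ℕ) d * gG (l2 : ℕ) d := by
        intro d
        rw [mul_mul_mul_comm, ← Complex.ofReal_mul,
          Real.mul_self_sqrt (by positivity)]
        push_cast
        ring
      rw [Finset.sum_congr rfl (fun d _ => hsq d),
        Fin.sum_univ_eq_sum_range
          (fun m => (2 / ((m : ℂ) * ((m : ℂ) + 1))) * gG (l1 : ℕ) m * gG (l2 : ℕ) m) n,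
        key, if_pos ⟨l1.isLt, l2.isLt⟩]
      have hsum : ∑ i : Fin n, (if i = l1 then (1:ℂ) else 0) * (if i = l2 then 1 else 0)
          = if l2 = l1 then 1 else 0 := by
        simp [ite_mul, zero_mul, one_mul, Finset.sum_ite_eq']
      rw [hsum]
      have hc : ((l1:ℕ) = (l2:ℕ)) ↔ (l2 = l1) := by rw [Fin.ext_iff, eq_comm]
      rw [if_congr hc rfl rfl]
      split_ifs <;> ring
    · rw [Finset.sum_eq_zero (fun d _ => by rw [if_neg hk2, mul_zero]),
        Finset.sum_eq_zero (fun i _ => ?_), Matrix.one_apply_ne hk2]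
      · ring
      · have : single i i (1:ℂ) l2 k2 = 0 := by
          simp only [single, Matrix.of_apply, ite_eq_right_iff, and_imp]
          intro h1' h2'; exact absurd (h1'.symm.trans h2') hk2
        rw [this, mul_zero]
  · rw [Finset.sum_eq_zero (fun d _ => by rw [if_neg hk1, zero_mul]),
      Finset.sum_eq_zero (fun i _ => ?_), Matrix.one_apply_ne hk1]
    · ring
    · have : single i i (1:ℂ) l1 k1 = 0 := by
        simp only [single, Matrix.of_apply, ite_eq_right_iff, and_imp]
        intro h1' h2'; exact absurd (h1'.symm.trans h2') hk1
      rw [this, zero_mul]
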